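/- Let Γ = HNN(G, H, θ) be a non-ascending HNN extension such that H ∩ θ(H) is finite. If the kernel ker Γ = ⋂_{r∈Γ} rHr⁻¹ is trivial, then both quasi-kernels K₋₁ and K₁ are trivial. -/

import Mathlib

namespace HNNStmt

open HNNExtension

variable {G : Type*} [Group G] (A B : Subgroup G) (φ : A ≃* B)

/-- The stable letter `τ` of the paper's convention: `τ⁻¹ h τ = θ(h)` for `h ∈ H = A`,
where `θ = φ`. In Mathlib's `HNNExtension`, `t * of a * t⁻¹ = of (φ a)`, so `τ = t⁻¹`. -/
def τ : HNNExtension G A B φ := (t : HNNExtension G A B φ)⁻¹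

/-- `H₋₁ = H = A` and `H₁ = θ(H) = B`. -/
def Hsub (ε : ℤ) : Subgroup G := if ε = 1 then B else A

/-- The word `g₁ τ^{ε₁} g₂ τ^{ε₂} ⋯ g_n τ^{ε_n} g_{n+1}` (zero-based indexing). -/
def wordProd (gs : ℕ → G) (εs : ℕ → ℤ) (n : ℕ) : HNNExtension G A B φ :=
  ((List.range n).map (fun i => of (gs i) * (τ A B φ) ^ (εs i))).prod * of (gs n)

/-- All exponents are `±1`. -/
def IsSign (εs : ℕ → ℤ) (n : ℕ) : Prop := ∀ i < n, εs i = 1 ∨ εs i = -1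

/-- The word `g₁ τ^{ε₁} ⋯ g_n τ^{ε_n} g_{n+1}` is reduced: whenever `ε_{i+1} = -ε_i`,
the letter `g_{i+1} ∉ H_{ε_i}`. -/
def Reduced (gs : ℕ → G) (εs : ℕ → ℤ) (n : ℕ) : Prop :=
  ∀ i : ℕ, i + 1 < n → εs (i + 1) = -εs i → gs (i + 1) ∉ Hsub A B (εs i)

/-- `T_ε^†`: the set of elements of length `≥ 1`, type `ε`, and initial letter `1`,
described via reduced words: `g` admits a reduced expression with first exponent `ε`
and first letter lying in `H_{-ε}`. -/
def Tdag (ε : ℤ) : Set (HNNExtension G A B φ) :=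
  {g | ∃ (n : ℕ) (gs : ℕ → G) (εs : ℕ → ℤ), 1 ≤ n ∧ IsSign εs n ∧
    Reduced A B gs εs n ∧ g = wordProd A B φ gs εs n ∧ εs 0 = ε ∧ gs 0 ∈ Hsub A B (-ε)}

/-- The quasi-kernel `K_ε = ⋂_{r ∈ Γ \ T_ε^†} r H r⁻¹`. -/
def K (ε : ℤ) : Subgroup (HNNExtension G A B φ) :=
  ⨅ (r : HNNExtension G A B φ) (_ : r ∉ Tdag A B φ ε),
    (A.map (of : G →* HNNExtension G A B φ)).map (MulAut.conj r).toMonoidHom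

end HNNStmt

namespace HNNStmt

open HNNExtension HNNExtension.NormalWord

variable {G : Type*} [Group G] (A B : Subgroup G) (φ : A ≃* B)

set_option linter.unusedSectionVars false

-- helpers
lemma wordProd_zero (gs : ℕ → G) (εs : ℕ → ℤ) :
    wordProd A B φ gs εs 0 = of (gs 0) := by simp [wordProd]

lemma wordProd_succ (gs : ℕ → G) (εs : ℕ → ℤ) (n : ℕ) :
    wordProd A B φ gs εs (n+1) =
      of (gs 0) * τ A B φ ^ (εs 0) *
        wordProd A B φ (gs ∘ Nat.succ) (εs ∘ Nat.succ) n := by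
  simp only [wordProd, List.range_succ_eq_map, List.map_cons, List.map_map,
    List.prod_cons, mul_assoc, Function.comp_def]

def pre {α : Type*} (x : α) (f : ℕ → α) : ℕ → α
  | 0 => x
  | (i+1) => f i

@[simp] lemma pre_zero {α : Type*} (x : α) (f : ℕ → α) : pre x f 0 = x := rfl
@[simp] lemma pre_succ {α : Type*} (x : α) (f : ℕ → α) (i : ℕ) : pre x f (i+1) = f i := rfl
@[simp] lemma pre_comp_succ {α : Type*} (x : α) (f : ℕ → α) : (pre x f) ∘ Nat.succ = f := rfl

lemma tau_zpow_one : τ A B φ ^ (1:ℤ) = (t : HNNExtension G A B φ)⁻¹ := by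
  simp [τ]

lemma tau_zpow_neg_one : τ A B φ ^ (-1:ℤ) = (t : HNNExtension G A B φ) := by
  simp [τ]


def uof (e : ℤ) : ℤˣ := if e = 1 then -1 else 1

lemma uof_coe {e : ℤ} (he : e = 1 ∨ e = -1) : ((uof e : ℤˣ) : ℤ) = -e := by
  rcases he with rfl | rfl <;> simp [uof]

lemma toSubgroup_uof (e : ℤ) : toSubgroup A B (uof e) = Hsub A B e := by
  by_cases h : e = 1 <;> simp [uof, Hsub, h, toSubgroup]

lemma toSubgroup_neg_uof {e : ℤ} (he : e = 1 ∨ e = -1) :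
    toSubgroup A B (-(uof e)) = Hsub A B (-e) := by
  rcases he with rfl | rfl <;> simp [uof, Hsub, toSubgroup]

lemma uof_inj {e e' : ℤ} (he : e = 1 ∨ e = -1) (he' : e' = 1 ∨ e' = -1)
    (h : uof e = uof e') : e = e' := by
  rcases he with rfl | rfl <;> rcases he' with rfl | rfl <;> simp_all [uof]

def rwList (gs : ℕ → G) (εs : ℕ → ℤ) (n : ℕ) : List (ℤˣ × G) :=
  (List.range n).map (fun i => (uof (εs i), gs (i+1)))

@[simp] lemma rwList_zero (gs : ℕ → G) (εs : ℕ → ℤ) : rwList gs εs 0 = [] := rfl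

lemma rwList_succ (gs : ℕ → G) (εs : ℕ → ℤ) (n : ℕ) :
    rwList gs εs (n+1) =
      (uof (εs 0), gs 1) :: rwList (gs ∘ Nat.succ) (εs ∘ Nat.succ) n := by
  simp [rwList, List.range_succ_eq_map, List.map_map, Function.comp_def]

lemma rwList_chain {gs : ℕ → G} {εs : ℕ → ℤ} {n : ℕ} (hsign : IsSign εs n)
    (hred : Reduced A B gs εs n) :
    (rwList gs εs n).Chain' (fun a b => a.2 ∈ toSubgroup A B a.1 → a.1 = b.1) := by
  cases n with
  | zero => exact List.IsChain.nil
  | succ m =>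
    rw [rwList, List.Chain', List.isChain_map, List.isChain_range_succ]
    intro i hi hmem
    by_contra hne
    have hsi := hsign i (by omega)
    have hsi1 := hsign (i+1) (by omega)
    have hεne : εs (i+1) = -εs i := by
      rcases hsi with h1 | h1 <;> rcases hsi1 with h2 | h2 <;>
        simp_all [uof] <;> omega
    exact hred i (by omega) hεne (by rwa [toSubgroup_uof] at hmem)

lemma tau_zpow (e : ℤ) : τ A B φ ^ e = (t : HNNExtension G A B φ) ^ (-e) := by
  simp [τ, zpow_neg, inv_zpow]

lemma rwList_prod {n : ℕ} (gs : ℕ → G) (εs : ℕ → ℤ) (hsign : IsSign εs n) :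
    of (gs 0) * ((rwList gs εs n).map
      (fun x => (t : HNNExtension G A B φ) ^ (x.1 : ℤ) * of x.2)).prod
      = wordProd A B φ gs εs n := by
  induction n generalizing gs εs with
  | zero => simp [wordProd_zero]
  | succ m ih =>
    rw [rwList_succ, wordProd_succ, List.map_cons, List.prod_cons,
      ← ih (gs ∘ Nat.succ) (εs ∘ Nat.succ) (fun i hi => hsign (i+1) (by omega)),
      uof_coe (hsign 0 (by omega)), ← tau_zpow]
    simp [mul_assoc, Function.comp_def]

/-- The `ReducedWord` associated to a sign reduced word. -/
def toRW {gs : ℕ → G} {εs : ℕ → ℤ} {n : ℕ} (hsign : IsSign εs n)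
    (hred : Reduced A B gs εs n) : ReducedWord G A B :=
  ⟨gs 0, rwList gs εs n, rwList_chain A B hsign hred⟩

lemma toRW_prod {gs : ℕ → G} {εs : ℕ → ℤ} {n : ℕ} (hsign : IsSign εs n)
    (hred : Reduced A B gs εs n) :
    (toRW A B hsign hred).prod φ = wordProd A B φ gs εs n := by
  rw [← rwList_prod A B φ gs εs hsign]; rfl


set_option linter.unusedSectionVars false

lemma Hsub_neg_coe (u : ℤˣ) : Hsub A B (-((u : ℤˣ) : ℤ)) = toSubgroup A B u := by
  rcases Int.units_eq_one_or u with rfl | rfl <;> simp [Hsub, toSubgroup]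

lemma uof_neg_coe (u : ℤˣ) : uof (-((u : ℤˣ) : ℤ)) = u := by
  rcases Int.units_eq_one_or u with rfl | rfl <;> simp [uof]

/-- Uniqueness invariants of reduced expressions. -/
lemma word_eq {gs gs' : ℕ → G} {εs εs' : ℕ → ℤ} {n n' : ℕ}
    (hsign : IsSign εs n) (hred : Reduced A B gs εs n)
    (hsign' : IsSign εs' n') (hred' : Reduced A B gs' εs' n')
    (h : wordProd A B φ gs εs n = wordProd A B φ gs' εs' n') :
    n = n' ∧ (∀ i < n, εs i = εs' i) ∧
      (0 < n → (gs 0)⁻¹ * gs' 0 ∈ Hsub A B (-(εs 0))) := by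
  have hprod : (toRW A B hsign hred).prod φ = (toRW A B hsign' hred').prod φ := by
    rw [toRW_prod, toRW_prod, h]
  obtain ⟨hfst, hhead⟩ := ReducedWord.map_fst_eq_and_of_prod_eq φ hprod
  have hlen : n = n' := by
    have := congrArg List.length hfst
    simpa [toRW, rwList] using this
  subst hlen
  have hpt : ∀ i < n, εs i = εs' i := by
    intro i hi
    have := congrArg (fun l => l[i]?) hfst
    simp only [toRW, rwList, List.map_map, List.getElem?_map, List.getElem?_range hi,
      Function.comp_def, Option.map_some] at this
    exact uof_inj (hsign i hi) (hsign' i hi) (Option.some.inj this)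
  refine ⟨rfl, hpt, ?_⟩
  intro hn
  obtain ⟨m, rfl⟩ : ∃ m, n = m + 1 := ⟨n - 1, by omega⟩
  have hu : (toRW A B hsign hred).toList.head?.map Prod.fst = some (uof (εs 0)) := by
    simp [toRW, rwList_succ]
  have h2 := hhead (uof (εs 0)) (by rw [hu]; rfl)
  rwa [toSubgroup_neg_uof A B (hsign 0 (by omega))] at h2

/-- Every element admits a sign reduced expression. -/
lemma exists_word (x : HNNExtension G A B φ) :
    ∃ (n : ℕ) (gs : ℕ → G) (εs : ℕ → ℤ), IsSign εs n ∧ Reduced A B gs εs n ∧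
      x = wordProd A B φ gs εs n := by
  rcases NormalWord.TransversalPair.nonempty G A B with ⟨d⟩
  set w : NormalWord d := NormalWord.equiv φ d x with hw
  have hprod : w.prod φ = x := (NormalWord.equiv φ d).left_inv x
  set l : List (ℤˣ × G) := w.toList with hl
  have hchain : l.Chain' (fun a b => a.2 ∈ toSubgroup A B a.1 → a.1 = b.1) := w.chain
  set gs : ℕ → G := fun i => if i = 0 then w.head else (l.getD (i-1) (1,1)).2 with hgs
  set εs : ℕ → ℤ := fun i => -(((l.getD i (1,1)).1 : ℤˣ) : ℤ) with hεs
  have hgs0 : gs 0 = w.head := by rw [hgs]; simp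
  have hgsS : ∀ i, (hi : i < l.length) → gs (i+1) = (l[i]'hi).2 := by
    intro i hi
    rw [hgs]
    show (if i + 1 = 0 then w.head else (l.getD (i+1-1) (1,1)).2) = (l[i]'hi).2
    rw [if_neg (Nat.succ_ne_zero i), Nat.add_sub_cancel, List.getD_eq_getElem _ _ hi]
  have hεsv : ∀ i, (hi : i < l.length) → εs i = -(((l[i]'hi).1 : ℤˣ) : ℤ) := by
    intro i hi
    rw [hεs]
    show -(((l.getD i (1,1)).1 : ℤˣ) : ℤ) = _
    rw [List.getD_eq_getElem _ _ hi]
  have hsign : IsSign εs l.length := by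
    intro i hi
    rw [hεsv i hi]
    rcases Int.units_eq_one_or l[i].1 with h | h <;> rw [h] <;> norm_num
  have hred : Reduced A B gs εs l.length := by
    intro i hi hne hmem
    have hi' : i < l.length := by omega
    have hch := List.isChain_iff_getElem.1 hchain i (by omega)
    have hfst : l[i+1].1 = -l[i].1 := by
      rw [hεsv _ hi, hεsv _ hi'] at hne
      refine Units.ext ?_
      have : ((l[i+1].1 : ℤˣ) : ℤ) = -((l[i].1 : ℤˣ) : ℤ) := by omega
      rw [this]; push_cast; ring
    have hmem' : l[i].2 ∈ toSubgroup A B l[i].1 := by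
      rw [hgsS _ hi', hεsv _ hi', Hsub_neg_coe] at hmem
      exact hmem
    have heq := hch (by simpa using hmem')
    rw [hfst] at heq
    rcases Int.units_eq_one_or l[i].1 with h | h <;> rw [h] at heq <;>
      exact absurd heq (by decide)
  refine ⟨l.length, gs, εs, hsign, hred, ?_⟩
  have hlist : rwList gs εs l.length = l := by
    refine List.ext_getElem (by simp [rwList]) ?_
    intro i hi1 hi2
    have hi : i < l.length := hi2
    simp only [rwList, List.getElem_map, List.getElem_range]
    refine Prod.ext ?_ ?_
    · show uof (εs i) = _
      rw [hεsv _ hi, uof_neg_coe]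
    · exact hgsS _ hi
  rw [← hprod, ← rwList_prod A B φ gs εs hsign, hlist, hgs0]
  rfl


lemma not_of_mem_Tdag (g : G) (ε : ℤ) : of g ∉ Tdag A B φ ε := by
  rintro ⟨n, gs, εs, hn, hsign, hred, heq, -, -⟩
  have h0 : of g = wordProd A B φ (fun _ => g) (fun _ => 1) 0 := by
    rw [wordProd_zero]
  rw [h0] at heq
  obtain ⟨h01, -, -⟩ := word_eq A B φ (fun i hi => absurd hi (by omega))
    (fun i hi => absurd hi (by omega)) hsign hred heq
  omega

lemma one_not_mem_Tdag (ε : ℤ) : (1 : HNNExtension G A B φ) ∉ Tdag A B φ ε := by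
  have h := not_of_mem_Tdag A B φ 1 ε
  simpa using h

lemma mem_conj_iff {x r : HNNExtension G A B φ} :
    x ∈ (A.map (of : G →* HNNExtension G A B φ)).map (MulAut.conj r).toMonoidHom ↔
      ∃ a : G, a ∈ A ∧ x = r * of a * r⁻¹ := by
  constructor
  · rintro ⟨y, ⟨a, ha, rfl⟩, rfl⟩
    exact ⟨a, ha, rfl⟩
  · rintro ⟨a, ha, rfl⟩
    exact ⟨of a, ⟨a, ha, rfl⟩, rfl⟩

lemma mem_K_iff {x : HNNExtension G A B φ} {ε : ℤ} :
    x ∈ K A B φ ε ↔ ∀ r : HNNExtension G A B φ, r ∉ Tdag A B φ ε →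
      ∃ a : G, a ∈ A ∧ x = r * of a * r⁻¹ := by
  simp only [K, Subgroup.mem_iInf]
  exact forall_congr' fun r => forall_congr' fun _ => mem_conj_iff A B φ

lemma K_le_conj {ε : ℤ} {r : HNNExtension G A B φ} (hr : r ∉ Tdag A B φ ε) :
    K A B φ ε ≤ (A.map (of : G →* HNNExtension G A B φ)).map (MulAut.conj r).toMonoidHom :=
  le_trans (iInf_le _ r) (iInf_le _ hr)

lemma prepend_not_mem_Tdag {ε : ℤ} (hε : ε = 1 ∨ ε = -1) (g : G)
    {r : HNNExtension G A B φ} (hr : r ∉ Tdag A B φ ε) :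
    of g * τ A B φ ^ (-ε) * r ∉ Tdag A B φ ε := by
  obtain ⟨n, gs, εs, hsign, hred, rfl⟩ := exists_word A B φ r
  have hsign2 : IsSign (pre (-ε) εs) (n+1) := by
    intro i hi
    cases i with
    | zero => rcases hε with rfl | rfl <;> simp
    | succ j => exact hsign j (by omega)
  have hred2 : Reduced A B (pre g gs) (pre (-ε) εs) (n+1) := by
    intro i hi hne
    cases i with
    | zero =>
      simp only [pre_zero, pre_succ] at hne ⊢
      rw [neg_neg] at hne
      intro hmem
      exact hr ⟨n, gs, εs, by omega, hsign, hred, rfl, hne, hmem⟩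
    | succ j =>
      simp only [pre_succ] at hne ⊢
      exact hred j (by omega) hne
  have heq2 : of g * τ A B φ ^ (-ε) * wordProd A B φ gs εs n =
      wordProd A B φ (pre g gs) (pre (-ε) εs) (n+1) := by
    rw [wordProd_succ]
    simp
  rw [heq2]
  rintro ⟨m, hs, δs, hm, signW, redW, heqW, hδ0, -⟩
  obtain ⟨hmn, hpt, -⟩ := word_eq A B φ hsign2 hred2 signW redW heqW
  have := hpt 0 (by omega)
  simp only [pre_zero] at this
  rw [hδ0] at this
  rcases hε with rfl | rfl <;> omega

lemma wordProd_head (x : G) (gs : ℕ → G) (εs : ℕ → ℤ) (n : ℕ) :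
    wordProd A B φ (pre x (gs ∘ Nat.succ)) εs n =
      of x * (of (gs 0))⁻¹ * wordProd A B φ gs εs n := by
  cases n with
  | zero =>
    rw [wordProd_zero, wordProd_zero]
    simp [mul_assoc]
  | succ m =>
    rw [wordProd_succ, wordProd_succ]
    simp [mul_assoc]

lemma of_mul_mem_Tdag {ε : ℤ} {h : G} (hh : h ∈ Hsub A B (-ε))
    {r : HNNExtension G A B φ} (hr : r ∈ Tdag A B φ ε) :
    of h * r ∈ Tdag A B φ ε := by
  obtain ⟨n, gs, εs, hn, hsign, hred, rfl, hε0, hg0⟩ := hr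
  refine ⟨n, pre (h * gs 0) (gs ∘ Nat.succ), εs, hn, hsign, ?_, ?_, hε0, ?_⟩
  · intro i hi hne
    cases i with
    | zero => simpa using hred 0 hi hne
    | succ j => simpa using hred (j+1) hi hne
  · rw [wordProd_head]
    simp [mul_assoc]
  · simpa using mul_mem hh hg0

lemma of_mul_mem_Tdag_iff {ε : ℤ} {h : G} (hh : h ∈ Hsub A B (-ε))
    (r : HNNExtension G A B φ) :
    of h * r ∈ Tdag A B φ ε ↔ r ∈ Tdag A B φ ε := by
  constructor
  · intro hmem
    have := of_mul_mem_Tdag A B φ (inv_mem hh) hmem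
    simpa [mul_assoc] using this
  · exact of_mul_mem_Tdag A B φ hh

lemma conj_mem_K {ε : ℤ} {h : G} (hh : h ∈ Hsub A B (-ε))
    {x : HNNExtension G A B φ} (hx : x ∈ K A B φ ε) :
    of h * x * (of h)⁻¹ ∈ K A B φ ε := by
  rw [mem_K_iff] at hx ⊢
  intro r hr
  have hr' : of h⁻¹ * r ∉ Tdag A B φ ε := by
    rw [of_mul_mem_Tdag_iff A B φ (inv_mem hh)]
    exact hr
  obtain ⟨a, ha, hxa⟩ := hx _ hr'
  refine ⟨a, ha, ?_⟩
  rw [hxa]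
  simp [mul_assoc]

lemma step_K {ε : ℤ} (hε : ε = 1 ∨ ε = -1) {x : HNNExtension G A B φ}
    (hx : x ∈ K A B φ ε) (g : G) :
    ∃ a₀ : G, a₀ ∈ A ∧ of a₀ ∈ K A B φ ε ∧
      (of g * τ A B φ ^ (-ε))⁻¹ * x * (of g * τ A B φ ^ (-ε)) = of a₀ := by
  have hy : ∀ r : HNNExtension G A B φ, r ∉ Tdag A B φ ε →
      ∃ a : G, a ∈ A ∧
        (of g * τ A B φ ^ (-ε))⁻¹ * x * (of g * τ A B φ ^ (-ε)) = r * of a * r⁻¹ := by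
    intro r hr
    obtain ⟨a, ha, hxa⟩ := (mem_K_iff A B φ).1 hx _ (prepend_not_mem_Tdag A B φ hε g hr)
    refine ⟨a, ha, ?_⟩
    rw [hxa]
    simp [mul_assoc]
  obtain ⟨a₀, ha₀, heq₀⟩ := hy 1 (one_not_mem_Tdag A B φ ε)
  simp only [one_mul, inv_one, mul_one] at heq₀
  refine ⟨a₀, ha₀, ?_, heq₀⟩
  rw [mem_K_iff]
  intro r hr
  obtain ⟨a, ha, hxa⟩ := hy r hr
  exact ⟨a, ha, by rw [← heq₀, hxa]⟩


lemma main_induct {ε : ℤ} (hε : ε = 1 ∨ ε = -1)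
    (hsurj : ∀ c : G, of c ∈ K A B φ ε →
      ∃ b : G, b ∈ A ∧ of b ∈ K A B φ ε ∧
        τ A B φ ^ (-ε) * of c * τ A B φ ^ ε = of b) :
    ∀ (n : ℕ) (gs : ℕ → G) (εs : ℕ → ℤ), IsSign εs n → Reduced A B gs εs n →
      ∀ a : G, of a ∈ K A B φ ε →
        of a ∈ (A.map (of : G →* HNNExtension G A B φ)).map
          (MulAut.conj (wordProd A B φ gs εs n)).toMonoidHom := by
  intro n
  induction n with
  | zero =>
    intro gs εs _ _ a ha
    refine K_le_conj A B φ ?_ ha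
    rw [wordProd_zero]
    exact not_of_mem_Tdag A B φ _ ε
  | succ k ih =>
    intro gs εs hsign hred a ha
    by_cases hT : wordProd A B φ gs εs (k+1) ∈ Tdag A B φ ε
    · obtain ⟨m, hs, δs, hm, signW, redW, heqW, hδ0, hh0⟩ := hT
      obtain ⟨hmn, -, -⟩ := word_eq A B φ hsign hred signW redW heqW
      subst hmn
      rw [heqW, wordProd_succ A B φ hs δs k, hδ0]
      have hc : of ((hs 0)⁻¹ * a * hs 0) ∈ K A B φ ε := by
        have := conj_mem_K A B φ (inv_mem hh0) ha
        simpa [mul_assoc] using this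
      obtain ⟨b, hbA, hbK, hbeq⟩ := hsurj _ hc
      have ihb := ih (hs ∘ Nat.succ) (δs ∘ Nat.succ)
        (fun i hi => signW (i+1) (by omega)) (fun i hi hne => redW (i+1) (by omega) hne)
        b hbK
      rw [mem_conj_iff] at ihb ⊢
      obtain ⟨a', ha', heq'⟩ := ihb
      refine ⟨a', ha', ?_⟩
      have h1 : of ((hs 0)⁻¹ * a * hs 0) = τ A B φ ^ ε * of b * (τ A B φ ^ ε)⁻¹ := by
        rw [← hbeq, ← zpow_neg]
        group
      have h2 : (of a : HNNExtension G A B φ) = of (hs 0) * of ((hs 0)⁻¹ * a * hs 0) * (of (hs 0))⁻¹ := by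
        simp [mul_assoc]
      rw [h2, h1, heq']
      simp only [mul_inv_rev, mul_assoc]
    · exact K_le_conj A B φ hT ha


lemma K_eq_bot {ε : ℤ} (hε : ε = 1 ∨ ε = -1)
    (hfin : ((A ⊓ B : Subgroup G) : Set G).Finite)
    (hker : (⨅ r : HNNExtension G A B φ,
        (A.map (of : G →* HNNExtension G A B φ)).map (MulAut.conj r).toMonoidHom) = ⊥) :
    K A B φ ε = ⊥ := by
  set S : Subgroup G := (K A B φ ε).comap (of : G →* HNNExtension G A B φ) with hSdef
  have hmemS : ∀ c : G, c ∈ S ↔ of c ∈ K A B φ ε := fun c => Iff.rfl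
  have hSA : ∀ c ∈ S, c ∈ A := by
    intro c hc
    obtain ⟨a, ha, heq⟩ := (mem_K_iff A B φ).1 ((hmemS c).1 hc) 1 (one_not_mem_Tdag A B φ ε)
    simp only [one_mul, inv_one, mul_one] at heq
    rwa [HNNExtension.of_injective φ heq]
  have hstep : ∀ c ∈ S, ∃ a₀ : G, a₀ ∈ A ∧ a₀ ∈ S ∧
      τ A B φ ^ ε * of c * τ A B φ ^ (-ε) = of a₀ := by
    intro c hc
    obtain ⟨a₀, ha₀, hK, heq⟩ := step_K A B φ hε ((hmemS c).1 hc) 1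
    refine ⟨a₀, ha₀, hK, ?_⟩
    simpa [zpow_neg, mul_assoc] using heq
  have hfinS : Finite (↥S) := by
    rcases hε with rfl | rfl
    · have hsub : (S : Set G) ⊆ ((A ⊓ B : Subgroup G) : Set G) := by
        intro c hc
        obtain ⟨a₀, ha₀, ha₀S, heq⟩ := hstep c hc
        rw [tau_zpow_one, tau_zpow_neg_one] at heq
        have h1 : (of c : HNNExtension G A B φ) = of (φ ⟨a₀, ha₀⟩ : G) := by
          rw [equiv_eq_conj, ← heq]
          group
        have h2 : c = (φ ⟨a₀, ha₀⟩ : G) := HNNExtension.of_injective φ h1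
        exact ⟨hSA c hc, h2 ▸ (φ ⟨a₀, ha₀⟩).2⟩
      exact (Set.Finite.subset hfin hsub).to_subtype
    · have hinto : ∀ c (hc : c ∈ S), (φ ⟨c, hSA c hc⟩ : G) ∈ (A ⊓ B : Subgroup G) := by
        intro c hc
        obtain ⟨a₀, ha₀, ha₀S, heq⟩ := hstep c hc
        rw [show ((-1 : ℤ)) = (-1 : ℤ) from rfl, tau_zpow_neg_one] at heq
        rw [show (-(-1 : ℤ)) = (1 : ℤ) from rfl, tau_zpow_one] at heq
        have h1 : (of (φ ⟨c, hSA c hc⟩ : G) : HNNExtension G A B φ) = of a₀ := by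
          rw [equiv_eq_conj, ← heq]
        have h2 : (φ ⟨c, hSA c hc⟩ : G) = a₀ := HNNExtension.of_injective φ h1
        exact ⟨h2 ▸ ha₀, (φ ⟨c, hSA c hc⟩).2⟩
      have hfi : Finite ↥((A ⊓ B : Subgroup G)) := hfin.to_subtype
      refine Finite.of_injective
        (fun c : ↥S => (⟨(φ ⟨c.1, hSA c.1 c.2⟩ : G), hinto c.1 c.2⟩ : ↥(A ⊓ B : Subgroup G)))
        ?_
      intro c c' hcc
      have h3 : (φ ⟨c.1, hSA c.1 c.2⟩ : G) = (φ ⟨c'.1, hSA c'.1 c'.2⟩ : G) := by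
        have := Subtype.ext_iff.1 hcc
        simpa using this
      have h4 : φ ⟨c.1, hSA c.1 c.2⟩ = φ ⟨c'.1, hSA c'.1 c'.2⟩ := Subtype.ext h3
      have h5 := φ.injective h4
      have h6 : c.1 = c'.1 := by simpa using h5
      exact Subtype.ext h6
  set Ψ : ↥S → ↥S := fun c => ⟨(hstep c.1 c.2).choose, (hstep c.1 c.2).choose_spec.2.1⟩
    with hΨdef
  have hΨeq : ∀ c : ↥S, τ A B φ ^ ε * of c.1 * τ A B φ ^ (-ε) = of (Ψ c).1 :=
    fun c => (hstep c.1 c.2).choose_spec.2.2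
  have hΨinj : Function.Injective Ψ := by
    intro c c' h
    have h1 := hΨeq c
    rw [h, ← hΨeq c'] at h1
    have h2 : (of c.1 : HNNExtension G A B φ) = of c'.1 := by
      have := mul_right_cancel h1
      exact mul_left_cancel this
    exact Subtype.ext (HNNExtension.of_injective φ h2)
  have hΨsurj : Function.Surjective Ψ := (Finite.injective_iff_surjective).1 hΨinj
  have hsurj : ∀ c : G, of c ∈ K A B φ ε →
      ∃ b : G, b ∈ A ∧ of b ∈ K A B φ ε ∧
        τ A B φ ^ (-ε) * of c * τ A B φ ^ ε = of b := by
    intro c hc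
    obtain ⟨b, hb⟩ := hΨsurj ⟨c, hc⟩
    refine ⟨b.1, hSA b.1 b.2, b.2, ?_⟩
    have h1 := hΨeq b
    rw [hb] at h1
    rw [← h1, zpow_neg]
    group
  rw [eq_bot_iff]
  intro x hx
  obtain ⟨a, haA, hxa⟩ := (mem_K_iff A B φ).1 hx 1 (one_not_mem_Tdag A B φ ε)
  simp only [one_mul, inv_one, mul_one] at hxa
  have hall : x ∈ ⨅ r : HNNExtension G A B φ,
      (A.map (of : G →* HNNExtension G A B φ)).map (MulAut.conj r).toMonoidHom := by
    rw [Subgroup.mem_iInf]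
    intro r
    obtain ⟨n, gs, εs, hsign, hred, rfl⟩ := exists_word A B φ r
    rw [hxa]
    exact main_induct A B φ hε hsurj n gs εs hsign hred a (hxa ▸ hx)
  rw [hker] at hall
  exact hall


end HNNStmt

open HNNExtension HNNStmt

/-- Let `Γ = HNN(G, H, θ)` be a non-ascending HNN extension with
`H ∩ θ(H)` finite. If the kernel `ker Γ = ⋂_{r ∈ Γ} rHr⁻¹` is trivial, then both
quasi-kernels `K₋₁` and `K₁` are trivial. -/
theorem stmt_14 {G : Type*} [Group G] (A B : Subgroup G) (φ : A ≃* B)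
    (hA : A ≠ ⊤) (hB : B ≠ ⊤)
    (hfin : ((A ⊓ B : Subgroup G) : Set G).Finite)
    (hker : (⨅ r : HNNExtension G A B φ,
        (A.map (of : G →* HNNExtension G A B φ)).map (MulAut.conj r).toMonoidHom) = ⊥) :
    K A B φ (-1) = ⊥ ∧ K A B φ 1 = ⊥ := by
  refine ⟨HNNStmt.K_eq_bot A B φ (Or.inr rfl) hfin hker,
    HNNStmt.K_eq_bot A B φ (Or.inl rfl) hfin hker⟩
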